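/- For every positive integer γ there exists a finite tree T with domination number γ(T) = γ such that Γ(T) > (2/5)·5^{γ/2}, i.e., T has more than (2/5)·√5^γ minimum dominating sets. -/

import Mathlib

/-- A set `D` of vertices is a dominating set if every vertex either lies in `D`
or is adjacent to a vertex of `D`. -/
def IsDominatingSet {V : Type*} (G : SimpleGraph V) (D : Finset V) : Prop :=
  ∀ v : V, v ∈ D ∨ ∃ w ∈ D, G.Adj v w

/-- The domination number: the minimum size of a dominating set. -/
noncomputable def dominationNumber {V : Type*} [Fintype V] (G : SimpleGraph V) : ℕ :=
  sInf {n | ∃ D : Finset V, IsDominatingSet G D ∧ D.card = n}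

/-- The number of minimum dominating sets. -/
noncomputable def numMinDomSets {V : Type*} [Fintype V] (G : SimpleGraph V) : ℕ :=
  Set.ncard {D : Finset V | IsDominatingSet G D ∧ D.card = dominationNumber G}

set_option linter.unusedSectionVars false
set_option linter.unreachableTactic false
set_option linter.unusedTactic false

open SimpleGraph


section ParentGraph

variable {V : Type} (par : V → V)

/-- The graph induced by a parent function. -/
def parentGraph : SimpleGraph V where
  Adj v w := v ≠ w ∧ (par v = w ∨ par w = v)
  symm := by
    refine ⟨?_⟩
    intro v w h
    exact ⟨h.1.symm, h.2.symm⟩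
  loopless := ⟨fun v h => h.1 rfl⟩

lemma parentGraph_adj {v w : V} :
    (parentGraph par).Adj v w ↔ v ≠ w ∧ (par v = w ∨ par w = v) := Iff.rfl

variable (ht : V → ℕ) (r : V) (hr : par r = r)
  (hht : ∀ v, v ≠ r → ht (par v) < ht v)

include hr hht

lemma ht_iter_le : ∀ (n : ℕ) (x : V), ht (par^[n] x) ≤ ht x := by
  intro n
  induction n with
  | zero => intro x; simp
  | succ n ih =>
    intro x
    rw [Function.iterate_succ_apply]
    refine (ih (par x)).trans ?_
    by_cases hx : x = r
    · subst hx; rw [hr]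
    · exact (hht x hx).le

lemma parentGraph_connected : (parentGraph par).Connected := by
  have key : ∀ (n : ℕ) (v : V), ht v ≤ n → (parentGraph par).Reachable v r := by
    intro n
    induction n with
    | zero =>
      intro v hv
      by_cases h : v = r
      · subst h; exact Reachable.refl _
      · exact absurd (hht v h) (by omega)
    | succ n ih =>
      intro v hv
      by_cases h : v = r
      · subst h; exact Reachable.refl _
      · have hlt := hht v h
        have hne : v ≠ par v := by
          intro he; rw [← he] at hlt; omega
        have hadj : (parentGraph par).Adj v (par v) := ⟨hne, Or.inl rfl⟩
        exact hadj.reachable.trans (ih (par v) (by omega))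
  have hpre : (parentGraph par).Preconnected := by
    intro u v
    exact (key (ht u) u le_rfl).trans (key (ht v) v le_rfl).symm
  haveI : Nonempty V := ⟨r⟩
  exact Connected.mk hpre

lemma parentGraph_bridge {a : V} (ha : par a ≠ a) :
    (parentGraph par).IsBridge s(a, par a) := by
  rw [isBridge_iff]
  intro hreach
  -- descendant invariant
  set G' := parentGraph par \ fromEdgeSet {s(a, par a)} with hG'
  have har : a ≠ r := by intro h; subst h; exact ha hr
  -- desc x : x is a descendant of a
  set desc : V → Prop := fun x => ∃ n, par^[n] x = a with hdesc
  have hstep : ∀ x : V, s(x, par x) ≠ s(a, par a) → (desc x ↔ desc (par x)) := by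
    intro x hx
    constructor
    · rintro ⟨n, hn⟩
      cases n with
      | zero =>
        simp only [Function.iterate_zero, id] at hn
        subst hn
        exact absurd rfl hx
      | succ n =>
        rw [Function.iterate_succ_apply] at hn
        exact ⟨n, hn⟩
    · rintro ⟨n, hn⟩
      exact ⟨n + 1, by rw [Function.iterate_succ_apply]; exact hn⟩
  have hadj : ∀ x y : V, G'.Adj x y → (desc x ↔ desc y) := by
    intro x y hxy
    rw [hG', sdiff_adj, fromEdgeSet_adj] at hxy
    obtain ⟨⟨hne, hor⟩, hnot⟩ := hxy
    have hne' : s(x, y) ≠ s(a, par a) := by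
      intro h; exact hnot ⟨by rw [h]; exact Set.mem_singleton _, hne⟩
    rcases hor with h | h
    · rw [← h]; exact hstep x (by rwa [h])
    · rw [← h]
      exact (hstep y (by rw [h, Sym2.eq_swap]; exact hne')).symm
  have hwalk : ∀ {x y : V}, G'.Walk x y → desc x → desc y := by
    intro x y p
    induction p with
    | nil => exact id
    | cons h q ih => intro hd; exact ih ((hadj _ _ h).mp hd)
  obtain ⟨p⟩ := hreach
  have hda : desc a := ⟨0, rfl⟩
  obtain ⟨n, hn⟩ := hwalk p hda
  have h1 : ht a ≤ ht (par a) := by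
    calc ht a = ht (par^[n] (par a)) := by rw [hn]
    _ ≤ ht (par a) := ht_iter_le par ht r hr hht n (par a)
  have h2 : ht (par a) < ht a := hht a har
  omega

lemma parentGraph_isTree : (parentGraph par).IsTree := by
  refine ⟨parentGraph_connected par ht r hr hht, ?_⟩
  rw [isAcyclic_iff_forall_adj_isBridge]
  intro v w hvw
  obtain ⟨hne, hor⟩ := hvw
  rcases hor with h | h
  · rw [← h]
    exact parentGraph_bridge par ht r hr hht (fun he => hne (h ▸ he).symm)
  · rw [← h, Sym2.eq_swap]
    exact parentGraph_bridge par ht r hr hht (fun he => hne (h ▸ he))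

end ParentGraph

section Domination

variable {V : Type} [Fintype V] [DecidableEq V] {G : SimpleGraph V}

lemma card_le_of_packing {ι : Type} [Fintype ι] (t : ι → V) (S : ι → Finset V)
    (hS : ∀ i w, (w = t i ∨ G.Adj (t i) w) → w ∈ S i)
    (hdisj : ∀ i j, i ≠ j → Disjoint (S i) (S j))
    {D : Finset V} (hD : IsDominatingSet G D) : Fintype.card ι ≤ D.card := by
  have key : ∀ i, ∃ w, w ∈ D ∧ (w = t i ∨ G.Adj (t i) w) := by
    intro i
    rcases hD (t i) with h | ⟨w, hw, hadj⟩
    · exact ⟨t i, h, Or.inl rfl⟩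
    · exact ⟨w, hw, Or.inr hadj⟩
  choose f hfD hfS using key
  have hmem : ∀ i, f i ∈ S i := fun i => hS i (f i) (hfS i)
  rw [← Finset.card_univ]
  refine Finset.card_le_card_of_injOn f (fun i _ => hfD i) ?_
  intro i _ j _ hij
  by_contra hne
  exact (Finset.disjoint_left.mp (hdisj i j hne)) (hmem i) (hij ▸ hmem j)

lemma dominationNumber_eq {γ : ℕ} (D₀ : Finset V) (hD₀ : IsDominatingSet G D₀)
    (hcard : D₀.card = γ) (hlow : ∀ D : Finset V, IsDominatingSet G D → γ ≤ D.card) :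
    dominationNumber G = γ := by
  have h1 : γ ∈ {n | ∃ D : Finset V, IsDominatingSet G D ∧ D.card = n} := ⟨D₀, hD₀, hcard⟩
  refine le_antisymm (Nat.sInf_le h1) ?_
  obtain ⟨D, hD, hc⟩ := Nat.sInf_mem (⟨γ, h1⟩ :
    Set.Nonempty {n | ∃ D : Finset V, IsDominatingSet G D ∧ D.card = n})
  rw [dominationNumber, ← hc]
  exact hlow D hD

lemma le_numMinDomSets {α : Type} [Fintype α] (f : α → Finset V)
    (hdom : ∀ a, IsDominatingSet G (f a)) (hcard : ∀ a, (f a).card = dominationNumber G)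
    (hinj : Function.Injective f) : Fintype.card α ≤ numMinDomSets G := by
  rw [numMinDomSets, ← Nat.card_coe_set_eq, ← Nat.card_eq_fintype_card]
  exact Nat.card_le_card_of_injective
    (fun a => (⟨f a, hdom a, hcard a⟩ :
      {D : Finset V | IsDominatingSet G D ∧ D.card = dominationNumber G}))
    (fun a b h => hinj (congrArg Subtype.val h))

end Domination

namespace OddT

variable (k : ℕ)

abbrev V := Fin 3 ⊕ Fin k × Fin 5

def par : V k → V k
  | Sum.inl _ => Sum.inl 0
  | Sum.inr (i, j) =>
    if h : j.val = 4 then Sum.inl 0 else Sum.inr (i, ⟨j.val + 1, by omega⟩)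

def ht : V k → ℕ
  | Sum.inl c => if c.val = 0 then 0 else 1
  | Sum.inr (_, j) => 6 - j.val

lemma hr : par k (Sum.inl 0) = Sum.inl 0 := rfl

lemma hht : ∀ v : V k, v ≠ Sum.inl 0 → ht k (par k v) < ht k v := by
  rintro (c | ⟨i, j⟩) hv
  · have hc : c.val ≠ 0 := by
      intro h
      exact hv (by rw [show c = 0 from Fin.ext h])
    simp [par, ht, hc]
  · by_cases h4 : j.val = 4
    · simp [par, ht, h4]
    · have hj : j.val < 4 := by have := j.isLt; omega
      simp only [par, ht, dif_neg h4]
      omega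

abbrev G := parentGraph (par k)

lemma adj_iff {v w : V k} : (G k).Adj v w ↔ v ≠ w ∧ (par k v = w ∨ par k w = v) := Iff.rfl

-- basic adjacencies
lemma adj_core (c : Fin 3) (hc : c ≠ 0) : (G k).Adj (Sum.inl c) (Sum.inl 0) :=
  ⟨by simp [hc], Or.inl rfl⟩

lemma par_step (i : Fin k) {j j' : Fin 5} (h : j.val + 1 = j'.val) :
    par k (Sum.inr (i, j)) = Sum.inr (i, j') := by
  have h4 : j.val ≠ 4 := by have := j'.isLt; omega
  simp only [par, dif_neg h4]
  have he : (⟨j.val + 1, by have := j'.isLt; omega⟩ : Fin 5) = j' := Fin.ext h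
  rw [he]

lemma adj_step (i : Fin k) {j j' : Fin 5} (h : j.val + 1 = j'.val) :
    (G k).Adj (Sum.inr (i, j)) (Sum.inr (i, j')) := by
  refine ⟨fun he => ?_, Or.inl (par_step k i h)⟩
  have hj : j = j' := congrArg Prod.snd (Sum.inr.inj he)
  rw [hj] at h
  omega

lemma adj_port (i : Fin k) : (G k).Adj (Sum.inr (i, 4)) (Sum.inl 0) :=
  ⟨by simp, Or.inl rfl⟩

-- the five leg configurations
def pa : Fin 5 → Fin 5 := ![1, 0, 1, 0, 1]
def pb : Fin 5 → Fin 5 := ![3, 3, 4, 2, 2]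

def Dset (f : Fin k → Fin 5) : Finset (V k) :=
  insert (Sum.inl 0)
    (Finset.univ.biUnion fun i => {Sum.inr (i, pa (f i)), Sum.inr (i, pb (f i))})

lemma mem_Dset_inl {f : Fin k → Fin 5} {c : Fin 3} :
    Sum.inl c ∈ Dset k f ↔ c = 0 := by
  simp [Dset]

lemma mem_Dset_inr {f : Fin k → Fin 5} {i : Fin k} {j : Fin 5} :
    Sum.inr (i, j) ∈ Dset k f ↔ j = pa (f i) ∨ j = pb (f i) := by
  simp only [Dset, Finset.mem_insert, Finset.mem_biUnion, Finset.mem_univ, true_and,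
    Finset.mem_singleton, Sum.inr.injEq, Prod.mk.injEq, reduceCtorEq, false_or]
  constructor
  · rintro ⟨i', ⟨rfl, rfl⟩ | ⟨rfl, rfl⟩⟩
    · exact Or.inl rfl
    · exact Or.inr rfl
  · rintro (rfl | rfl)
    · exact ⟨i, Or.inl ⟨rfl, rfl⟩⟩
    · exact ⟨i, Or.inr ⟨rfl, rfl⟩⟩

lemma pa_ne_pb : ∀ c : Fin 5, pa c ≠ pb c := by decide

lemma card_Dset (f : Fin k → Fin 5) : (Dset k f).card = 2 * k + 1 := by
  rw [Dset, Finset.card_insert_of_notMem (by simp), Finset.card_biUnion]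
  · rw [Finset.sum_congr rfl (g := fun _ => 2)
      (fun i _ => by
        rw [Finset.card_insert_of_notMem (by simp [pa_ne_pb (f i)]), Finset.card_singleton])]
    simp [Finset.card_univ, mul_comm]
  · intro i _ j _ hij
    rw [Function.onFun, Finset.disjoint_left]
    rintro a ha hb
    simp only [Finset.mem_insert, Finset.mem_singleton] at ha hb
    rcases ha with rfl | rfl <;> rcases hb with h | h <;>
      (simp only [Sum.inr.injEq, Prod.mk.injEq] at h; exact hij h.1)

lemma Dset_dominating (f : Fin k → Fin 5) : IsDominatingSet (G k) (Dset k f) := by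
  intro v
  rcases v with c | ⟨i, j⟩
  · by_cases hc : c = 0
    · subst hc; exact Or.inl ((mem_Dset_inl k).mpr rfl)
    · exact Or.inr ⟨Sum.inl 0, (mem_Dset_inl k).mpr rfl, adj_core k c hc⟩
  · obtain ⟨c, hc⟩ : ∃ c, c = f i := ⟨f i, rfl⟩
    have hpa : Sum.inr (i, pa (f i)) ∈ Dset k f := (mem_Dset_inr k).mpr (Or.inl rfl)
    have hpb : Sum.inr (i, pb (f i)) ∈ Dset k f := (mem_Dset_inr k).mpr (Or.inr rfl)
    have hin : ∀ j' : Fin 5, j' = pa (f i) ∨ j' = pb (f i) → Sum.inr (i, j') ∈ Dset k f :=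
      fun j' h => (mem_Dset_inr k).mpr h
    have h0 : Sum.inl 0 ∈ Dset k f := (mem_Dset_inl k).mpr rfl
    fin_cases c <;> fin_cases j <;>
      [skip; skip; skip; skip; skip; skip; skip; skip; skip; skip;
       skip; skip; skip; skip; skip; skip; skip; skip; skip; skip;
       skip; skip; skip; skip; skip] <;>
    first
    | (exact Or.inl (hin _ (by rw [← hc]; decide)))
    | (exact Or.inr ⟨_, hin (pa (f i)) (Or.inl rfl), by
        rw [← hc]; first
          | exact adj_step k i (by decide)
          | exact (adj_step k i (by decide)).symm⟩)
    | (exact Or.inr ⟨_, hin (pb (f i)) (Or.inr rfl), by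
        rw [← hc]; first
          | exact adj_step k i (by decide)
          | exact (adj_step k i (by decide)).symm⟩)
    | (exact Or.inr ⟨Sum.inl 0, h0, adj_port k i⟩)


lemma key5 : ∀ a b : Fin 5, (pa a = pa b ∨ pa a = pb b) → (pb a = pa b ∨ pb a = pb b) → a = b := by
  decide

lemma Dset_injective : Function.Injective (Dset k) := by
  intro f g h
  funext i
  have h1 : Sum.inr (i, pa (f i)) ∈ Dset k g := by
    rw [← h]; exact (mem_Dset_inr k).mpr (Or.inl rfl)
  have h2 : Sum.inr (i, pb (f i)) ∈ Dset k g := by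
    rw [← h]; exact (mem_Dset_inr k).mpr (Or.inr rfl)
  exact key5 (f i) (g i) ((mem_Dset_inr k).mp h1) ((mem_Dset_inr k).mp h2)

-- packing for the lower bound
abbrev I := Unit ⊕ Fin k ⊕ Fin k

def tgt : I k → V k
  | Sum.inl _ => Sum.inl 1
  | Sum.inr (Sum.inl i) => Sum.inr (i, 0)
  | Sum.inr (Sum.inr i) => Sum.inr (i, 3)

def Spack : I k → Finset (V k)
  | Sum.inl _ => {Sum.inl 0, Sum.inl 1, Sum.inl 2}
  | Sum.inr (Sum.inl i) => {Sum.inr (i, 0), Sum.inr (i, 1)}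
  | Sum.inr (Sum.inr i) => {Sum.inr (i, 2), Sum.inr (i, 3), Sum.inr (i, 4)}

lemma par_ne_inl1 (w : V k) : par k w ≠ Sum.inl 1 := by
  rcases w with c | ⟨i, j⟩
  · simp [par]
  · by_cases h4 : j.val = 4 <;> simp [par, h4]

lemma par_eq_inr {w : V k} {i : Fin k} {j : Fin 5} (h : par k w = Sum.inr (i, j)) :
    ∃ j' : Fin 5, w = Sum.inr (i, j') ∧ j'.val + 1 = j.val := by
  rcases w with c | ⟨i', j'⟩
  · simp [par] at h
  · by_cases h4 : j'.val = 4
    · simp [par, h4] at h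
    · simp only [par, dif_neg h4, Sum.inr.injEq, Prod.mk.injEq] at h
      obtain ⟨rfl, hj⟩ := h
      exact ⟨j', rfl, by rw [← hj]⟩

lemma hS_pack : ∀ i w, (w = tgt k i ∨ (G k).Adj (tgt k i) w) → w ∈ Spack k i := by
  rintro (u | i | i) w hw
  · rcases hw with rfl | ⟨hne, hor⟩
    · simp [tgt, Spack]
    · rcases hor with h | h
      · rw [← h]; simp [tgt, par, Spack]
      · exact absurd h (par_ne_inl1 k w)
  · rcases hw with rfl | ⟨hne, hor⟩
    · simp [tgt, Spack]
    · rcases hor with h | h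
      · rw [← h, show par k (tgt k (Sum.inr (Sum.inl i))) = Sum.inr (i, 1) from
          par_step k i (by decide)]
        simp [Spack]
      · obtain ⟨j', rfl, hj⟩ := par_eq_inr k (h : par k w = Sum.inr (i, 0))
        simp at hj
  · rcases hw with rfl | ⟨hne, hor⟩
    · simp [tgt, Spack]
    · rcases hor with h | h
      · rw [← h, show par k (tgt k (Sum.inr (Sum.inr i))) = Sum.inr (i, 4) from
          par_step k i (by decide)]
        simp [Spack]
      · obtain ⟨j', rfl, hj⟩ := par_eq_inr k (h : par k w = Sum.inr (i, 3))
        have h3 : ((3 : Fin 5)).val = 3 := rfl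
        have : j' = 2 := Fin.ext (by omega)
        subst this
        simp [Spack]

lemma disj_pack : ∀ i j : I k, i ≠ j → Disjoint (Spack k i) (Spack k j) := by
  rintro (u | i | i) (u' | i' | i') hne <;>
    rw [Finset.disjoint_left] <;>
    intro a ha hb <;>
    simp only [Spack, Finset.mem_insert, Finset.mem_singleton] at ha hb <;>
    [skip; skip; skip; skip; skip; skip; skip; skip; skip]
  · exact hne rfl
  · rcases ha with rfl | rfl | rfl <;> simp_all
  · rcases ha with rfl | rfl | rfl <;> simp_all
  · rcases ha with rfl | rfl <;> simp_all
  · have hii : i ≠ i' := fun h => hne (by rw [h])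
    rcases ha with rfl | rfl <;> rcases hb with hb | hb <;>
      simp only [Sum.inr.injEq, Prod.mk.injEq] at hb <;> exact hii hb.1
  · rcases ha with rfl | rfl <;> rcases hb with hb | hb | hb <;>
      simp only [Sum.inr.injEq, Prod.mk.injEq] at hb <;>
      first
        | exact absurd hb.2 (by decide)
        | (obtain ⟨h1, h2⟩ := hb; exact absurd h2 (by decide))
  · rcases ha with rfl | rfl | rfl <;> simp_all
  · rcases ha with rfl | rfl | rfl <;> rcases hb with hb | hb <;>
      simp only [Sum.inr.injEq, Prod.mk.injEq] at hb <;>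
      first
        | exact absurd hb.2 (by decide)
        | (obtain ⟨h1, h2⟩ := hb; exact absurd h2 (by decide))
  · have hii : i ≠ i' := fun h => hne (by rw [h])
    rcases ha with rfl | rfl | rfl <;> rcases hb with hb | hb | hb <;>
      simp only [Sum.inr.injEq, Prod.mk.injEq] at hb <;> exact hii hb.1

lemma domNum : dominationNumber (G k) = 2 * k + 1 := by
  refine dominationNumber_eq (Dset k fun _ => 0) (Dset_dominating k _) (card_Dset k _) ?_
  intro D hD
  have := card_le_of_packing (tgt k) (Spack k) (hS_pack k) (disj_pack k) hD
  simp only [Fintype.card_sum, Fintype.card_prod, Fintype.card_unit, Fintype.card_fin] at this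
  omega

lemma count : 5 ^ k ≤ numMinDomSets (G k) := by
  have := le_numMinDomSets (G := G k) (Dset k) (Dset_dominating k)
    (fun f => by rw [card_Dset k f, domNum k]) (Dset_injective k)
  simpa using this

lemma isTree : (G k).IsTree :=
  parentGraph_isTree (par k) (ht k) (Sum.inl 0) (hr k) (hht k)

end OddT

namespace EvenT

variable (k : ℕ)

abbrev V := Fin 4 ⊕ Fin k × Fin 5

def par : V k → V k
  | Sum.inl c => Sum.inl ⟨c.val - 1, by omega⟩
  | Sum.inr (i, j) =>
    if h : j.val = 4 then Sum.inl 1 else Sum.inr (i, ⟨j.val + 1, by omega⟩)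

def ht : V k → ℕ
  | Sum.inl c => c.val
  | Sum.inr (_, j) => 7 - j.val

lemma hr : par k (Sum.inl 0) = Sum.inl 0 := rfl

lemma hht : ∀ v : V k, v ≠ Sum.inl 0 → ht k (par k v) < ht k v := by
  rintro (c | ⟨i, j⟩) hv
  · have hc : c.val ≠ 0 := by
      intro h
      exact hv (by rw [show c = 0 from Fin.ext h])
    simp only [par, ht]
    omega
  · by_cases h4 : j.val = 4
    · simp [par, ht, h4]
    · have hj : j.val < 4 := by have := j.isLt; omega
      simp only [par, ht, dif_neg h4]
      omega

abbrev G := parentGraph (par k)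

lemma par_step (i : Fin k) {j j' : Fin 5} (h : j.val + 1 = j'.val) :
    par k (Sum.inr (i, j)) = Sum.inr (i, j') := by
  have h4 : j.val ≠ 4 := by have := j'.isLt; omega
  simp only [par, dif_neg h4]
  have he : (⟨j.val + 1, by have := j'.isLt; omega⟩ : Fin 5) = j' := Fin.ext h
  rw [he]

lemma adj_step (i : Fin k) {j j' : Fin 5} (h : j.val + 1 = j'.val) :
    (G k).Adj (Sum.inr (i, j)) (Sum.inr (i, j')) := by
  refine ⟨fun he => ?_, Or.inl (par_step k i h)⟩
  have hj : j = j' := congrArg Prod.snd (Sum.inr.inj he)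
  rw [hj] at h
  omega

lemma adj_port (i : Fin k) : (G k).Adj (Sum.inr (i, 4)) (Sum.inl 1) :=
  ⟨by simp, Or.inl rfl⟩

lemma par_core {c c' : Fin 4} (h : c'.val + 1 = c.val) :
    par k (Sum.inl c) = Sum.inl c' := by
  simp only [par]
  exact congrArg Sum.inl (Fin.ext (show c.val - 1 = c'.val by omega))

lemma adj_core {c c' : Fin 4} (h : c'.val + 1 = c.val) :
    (G k).Adj (Sum.inl c) (Sum.inl c') := by
  refine ⟨fun he => ?_, Or.inl (par_core k h)⟩
  have := Sum.inl.inj he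
  rw [this] at h
  omega

-- leg configurations
def pa : Fin 5 → Fin 5 := ![1, 0, 1, 0, 1]
def pb : Fin 5 → Fin 5 := ![3, 3, 4, 2, 2]

def legs (f : Fin k → Fin 5) : Finset (V k) :=
  Finset.univ.biUnion fun i => {Sum.inr (i, pa (f i)), Sum.inr (i, pb (f i))}

def DE (C : Finset (Fin 4)) (f : Fin k → Fin 5) : Finset (V k) :=
  C.image Sum.inl ∪ legs k f

lemma mem_DE_inl {C : Finset (Fin 4)} {f : Fin k → Fin 5} {c : Fin 4} :
    Sum.inl c ∈ DE k C f ↔ c ∈ C := by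
  simp [DE, legs]

lemma mem_DE_inr {C : Finset (Fin 4)} {f : Fin k → Fin 5} {i : Fin k} {j : Fin 5} :
    Sum.inr (i, j) ∈ DE k C f ↔ j = pa (f i) ∨ j = pb (f i) := by
  simp only [DE, legs, Finset.mem_union, Finset.mem_image, Finset.mem_biUnion, Finset.mem_univ,
    true_and, Finset.mem_insert, Finset.mem_singleton, Sum.inr.injEq, Prod.mk.injEq,
    reduceCtorEq, and_false, exists_false, false_or]
  constructor
  · rintro ⟨i', ⟨rfl, rfl⟩ | ⟨rfl, rfl⟩⟩
    · exact Or.inl rfl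
    · exact Or.inr rfl
  · rintro (rfl | rfl)
    · exact ⟨i, Or.inl ⟨rfl, rfl⟩⟩
    · exact ⟨i, Or.inr ⟨rfl, rfl⟩⟩

lemma pa_ne_pb : ∀ c : Fin 5, pa c ≠ pb c := by decide

lemma card_legs (f : Fin k → Fin 5) : (legs k f).card = 2 * k := by
  rw [legs, Finset.card_biUnion]
  · rw [Finset.sum_congr rfl (g := fun _ => 2)
      (fun i _ => by
        rw [Finset.card_insert_of_notMem (by simp [pa_ne_pb (f i)]), Finset.card_singleton])]
    simp [Finset.card_univ, mul_comm]
  · intro i _ j _ hij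
    rw [Function.onFun, Finset.disjoint_left]
    rintro a ha hb
    simp only [Finset.mem_insert, Finset.mem_singleton] at ha hb
    rcases ha with rfl | rfl <;> rcases hb with h | h <;>
      (simp only [Sum.inr.injEq, Prod.mk.injEq] at h; exact hij h.1)

lemma card_DE {C : Finset (Fin 4)} (f : Fin k → Fin 5) :
    (DE k C f).card = C.card + 2 * k := by
  rw [DE, Finset.card_union_of_disjoint, Finset.card_image_of_injective _ Sum.inl_injective,
    card_legs]
  rw [Finset.disjoint_left]
  rintro a ha hb
  simp only [Finset.mem_image] at ha
  obtain ⟨c, -, rfl⟩ := ha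
  simp [legs] at hb

-- domination of leg vertices when the port-helper w2 = inl 1 is in the core
lemma legs_dom_full {C : Finset (Fin 4)} (h1 : (1 : Fin 4) ∈ C) (f : Fin k → Fin 5)
    (i : Fin k) (j : Fin 5) :
    Sum.inr (i, j) ∈ DE k C f ∨ ∃ w ∈ DE k C f, (G k).Adj (Sum.inr (i, j)) w := by
  obtain ⟨c, hc⟩ : ∃ c, c = f i := ⟨f i, rfl⟩
  have hin : ∀ j' : Fin 5, j' = pa (f i) ∨ j' = pb (f i) → Sum.inr (i, j') ∈ DE k C f :=
    fun j' h => (mem_DE_inr k).mpr h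
  have h0 : Sum.inl 1 ∈ DE k C f := (mem_DE_inl k).mpr h1
  fin_cases c <;> fin_cases j <;>
  first
  | (exact Or.inl (hin _ (by rw [← hc]; decide)))
  | (exact Or.inr ⟨_, hin (pa (f i)) (Or.inl rfl), by
      rw [← hc]; first
        | exact adj_step k i (by decide)
        | exact (adj_step k i (by decide)).symm⟩)
  | (exact Or.inr ⟨_, hin (pb (f i)) (Or.inr rfl), by
      rw [← hc]; first
        | exact adj_step k i (by decide)
        | exact (adj_step k i (by decide)).symm⟩)
  | (exact Or.inr ⟨Sum.inl 1, h0, adj_port k i⟩)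

-- domination of leg vertices for the restricted configurations (indices 0,1,2)
lemma legs_dom_3 {C : Finset (Fin 4)} (g : Fin k → Fin 3) (i : Fin k) (j : Fin 5) :
    Sum.inr (i, j) ∈ DE k C (fun i => Fin.castLE (by norm_num) (g i)) ∨
      ∃ w ∈ DE k C (fun i => Fin.castLE (by norm_num) (g i)),
        (G k).Adj (Sum.inr (i, j)) w := by
  set f : Fin k → Fin 5 := fun i => Fin.castLE (by norm_num) (g i) with hf
  obtain ⟨c, hc⟩ : ∃ c, c = g i := ⟨g i, rfl⟩
  have hc' : Fin.castLE (by norm_num) c = f i := by rw [hf, hc]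
  have hin : ∀ j' : Fin 5, j' = pa (f i) ∨ j' = pb (f i) → Sum.inr (i, j') ∈ DE k C f :=
    fun j' h => (mem_DE_inr k).mpr h
  fin_cases c <;> fin_cases j <;>
  first
  | (exact Or.inl (hin _ (by rw [← hc']; decide)))
  | (exact Or.inr ⟨_, hin (pa (f i)) (Or.inl rfl), by
      rw [← hc']; first
        | exact adj_step k i (by decide)
        | exact (adj_step k i (by decide)).symm⟩)
  | (exact Or.inr ⟨_, hin (pb (f i)) (Or.inr rfl), by
      rw [← hc']; first
        | exact adj_step k i (by decide)
        | exact (adj_step k i (by decide)).symm⟩)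

-- the three cores
lemma dom_12 (f : Fin k → Fin 5) : IsDominatingSet (G k) (DE k {1, 2} f) := by
  intro v
  rcases v with c | ⟨i, j⟩
  · have h1 : Sum.inl 1 ∈ DE k {1, 2} f := (mem_DE_inl k).mpr (by decide)
    have h2 : Sum.inl 2 ∈ DE k {1, 2} f := (mem_DE_inl k).mpr (by decide)
    fin_cases c
    · exact Or.inr ⟨Sum.inl 1, h1, (adj_core k (by decide)).symm⟩
    · exact Or.inl h1
    · exact Or.inl h2
    · exact Or.inr ⟨Sum.inl 2, h2, adj_core k (by decide)⟩
  · exact legs_dom_full k (by decide) f i j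

lemma dom_13 (f : Fin k → Fin 5) : IsDominatingSet (G k) (DE k {1, 3} f) := by
  intro v
  rcases v with c | ⟨i, j⟩
  · have h1 : Sum.inl 1 ∈ DE k {1, 3} f := (mem_DE_inl k).mpr (by decide)
    have h3 : Sum.inl 3 ∈ DE k {1, 3} f := (mem_DE_inl k).mpr (by decide)
    fin_cases c
    · exact Or.inr ⟨Sum.inl 1, h1, (adj_core k (by decide)).symm⟩
    · exact Or.inl h1
    · exact Or.inr ⟨Sum.inl 1, h1, adj_core k (by decide)⟩
    · exact Or.inl h3
  · exact legs_dom_full k (by decide) f i j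

lemma dom_02 (g : Fin k → Fin 3) :
    IsDominatingSet (G k) (DE k {0, 2} (fun i => Fin.castLE (by norm_num) (g i))) := by
  intro v
  rcases v with c | ⟨i, j⟩
  · have h0 : Sum.inl 0 ∈ DE k {0, 2} (fun i => Fin.castLE (by norm_num) (g i)) :=
      (mem_DE_inl k).mpr (by decide)
    have h2 : Sum.inl 2 ∈ DE k {0, 2} (fun i => Fin.castLE (by norm_num) (g i)) :=
      (mem_DE_inl k).mpr (by decide)
    fin_cases c
    · exact Or.inl h0
    · exact Or.inr ⟨Sum.inl 0, h0, adj_core k (by decide)⟩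
    · exact Or.inl h2
    · exact Or.inr ⟨Sum.inl 2, h2, adj_core k (by decide)⟩
  · exact legs_dom_3 k g i j


-- the injection domain
abbrev A := (Bool × (Fin k → Fin 5)) ⊕ (Fin k → Fin 3)

def coreOf : Bool → Finset (Fin 4)
  | false => {1, 2}
  | true => {1, 3}

def emb3 (c : Fin 3) : Fin 5 := Fin.castLE (by norm_num) c

def F : A k → Finset (V k)
  | Sum.inl (b, f) => DE k (coreOf b) f
  | Sum.inr g => DE k {0, 2} (fun i => emb3 (g i))

lemma F_dominating (x : A k) : IsDominatingSet (G k) (F k x) := by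
  rcases x with ⟨b, f⟩ | g
  · cases b
    · exact dom_12 k f
    · exact dom_13 k f
  · exact dom_02 k g

lemma F_card (x : A k) : (F k x).card = 2 * k + 2 := by
  rcases x with ⟨b, f⟩ | g
  · cases b <;> simp [F, card_DE, coreOf] <;> omega
  · simp [F, card_DE]
    omega

lemma key5 : ∀ a b : Fin 5, (pa a = pa b ∨ pa a = pb b) → (pb a = pa b ∨ pb a = pb b) → a = b := by
  decide

lemma DE_inj_f {C C' : Finset (Fin 4)} {f f' : Fin k → Fin 5}
    (h : DE k C f = DE k C' f') : f = f' := by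
  funext i
  have h1 : Sum.inr (i, pa (f i)) ∈ DE k C' f' := by
    rw [← h]; exact (mem_DE_inr k).mpr (Or.inl rfl)
  have h2 : Sum.inr (i, pb (f i)) ∈ DE k C' f' := by
    rw [← h]; exact (mem_DE_inr k).mpr (Or.inr rfl)
  exact key5 (f i) (f' i) ((mem_DE_inr k).mp h1) ((mem_DE_inr k).mp h2)

lemma F_injective : Function.Injective (F k) := by
  rintro (⟨b, f⟩ | g) (⟨b', f'⟩ | g') h
  · have hb : b = b' := by
      by_contra hne
      cases b <;> cases b'
      · exact hne rfl
      · have h' : DE k (coreOf false) f = DE k (coreOf true) f' := h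
        have h3 : (Sum.inl 3 : V k) ∈ DE k (coreOf false) f := by
          rw [h']; exact (mem_DE_inl k).mpr (by decide)
        exact absurd ((mem_DE_inl k).mp h3) (by decide)
      · have h' : DE k (coreOf true) f = DE k (coreOf false) f' := h
        have h3 : (Sum.inl 3 : V k) ∈ DE k (coreOf false) f' := by
          rw [← h']; exact (mem_DE_inl k).mpr (by decide)
        exact absurd ((mem_DE_inl k).mp h3) (by decide)
      · exact hne rfl
    subst hb
    have hf : f = f' := DE_inj_f k h
    rw [hf]
  · exfalso
    have h0 : Sum.inl 0 ∈ F k (Sum.inr g') := (mem_DE_inl k).mpr (by decide)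
    rw [← h] at h0
    cases b <;> simp [F, mem_DE_inl, coreOf] at h0
  · exfalso
    have h0 : Sum.inl 0 ∈ F k (Sum.inr g) := (mem_DE_inl k).mpr (by decide)
    rw [h] at h0
    cases b' <;> simp [F, mem_DE_inl, coreOf] at h0
  · have hf := DE_inj_f k h
    have : ∀ i, emb3 (g i) = emb3 (g' i) := fun i => congrFun hf i
    have hg : ∀ i, g i = g' i := by
      intro i
      have := this i
      exact Fin.ext (by simpa [emb3] using congrArg Fin.val this)
    rw [funext hg]

-- packing
abbrev I := Bool ⊕ Fin k ⊕ Fin k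

def tgt : I k → V k
  | Sum.inl false => Sum.inl 0
  | Sum.inl true => Sum.inl 3
  | Sum.inr (Sum.inl i) => Sum.inr (i, 0)
  | Sum.inr (Sum.inr i) => Sum.inr (i, 3)

def Spack : I k → Finset (V k)
  | Sum.inl false => {Sum.inl 0, Sum.inl 1}
  | Sum.inl true => {Sum.inl 2, Sum.inl 3}
  | Sum.inr (Sum.inl i) => {Sum.inr (i, 0), Sum.inr (i, 1)}
  | Sum.inr (Sum.inr i) => {Sum.inr (i, 2), Sum.inr (i, 3), Sum.inr (i, 4)}

lemma par_eq_inl0 {w : V k} (h : par k w = Sum.inl 0) :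
    w = Sum.inl 0 ∨ w = Sum.inl 1 := by
  rcases w with c | ⟨i, j⟩
  · simp only [par, Sum.inl.injEq] at h
    have hc : c.val - 1 = 0 := by exact congrArg Fin.val h
    have := c.isLt
    rcases Nat.lt_or_ge c.val 1 with h1 | h1
    · left; exact congrArg Sum.inl (Fin.ext (by omega))
    · right
      exact congrArg Sum.inl (Fin.ext (show c.val = 1 by omega))
  · by_cases h4 : j.val = 4 <;> simp [par, h4] at h

lemma par_ne_inl3 (w : V k) : par k w ≠ Sum.inl 3 := by
  rcases w with c | ⟨i, j⟩
  · simp only [par, Sum.inl.injEq]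
    intro h
    have hc : c.val - 1 = 3 := by exact congrArg Fin.val (Sum.inl.inj h)
    have := c.isLt
    omega
  · by_cases h4 : j.val = 4 <;> simp [par, h4]

lemma par_eq_inr {w : V k} {i : Fin k} {j : Fin 5} (h : par k w = Sum.inr (i, j)) :
    ∃ j' : Fin 5, w = Sum.inr (i, j') ∧ j'.val + 1 = j.val := by
  rcases w with c | ⟨i', j'⟩
  · simp [par] at h
  · by_cases h4 : j'.val = 4
    · simp [par, h4] at h
    · simp only [par, dif_neg h4, Sum.inr.injEq, Prod.mk.injEq] at h
      obtain ⟨rfl, hj⟩ := h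
      exact ⟨j', rfl, by rw [← hj]⟩

lemma hS_pack : ∀ i w, (w = tgt k i ∨ (G k).Adj (tgt k i) w) → w ∈ Spack k i := by
  rintro (b | i | i) w hw
  · cases b
    · rcases hw with rfl | ⟨hne, hor⟩
      · simp [tgt, Spack]
      · rcases hor with h | h
        · rw [← h]
          simp [tgt, par, Spack]
        · rcases par_eq_inl0 k h with rfl | rfl <;> simp [Spack]
    · rcases hw with rfl | ⟨hne, hor⟩
      · simp [tgt, Spack]
      · rcases hor with h | h
        · rw [← h, show par k (tgt k (Sum.inl true)) = Sum.inl 2 from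
            par_core k (by decide)]
          simp [Spack]
        · exact absurd h (par_ne_inl3 k w)
  · rcases hw with rfl | ⟨hne, hor⟩
    · simp [tgt, Spack]
    · rcases hor with h | h
      · rw [← h, show par k (tgt k (Sum.inr (Sum.inl i))) = Sum.inr (i, 1) from
          par_step k i (by decide)]
        simp [Spack]
      · obtain ⟨j', rfl, hj⟩ := par_eq_inr k (h : par k w = Sum.inr (i, 0))
        simp at hj
  · rcases hw with rfl | ⟨hne, hor⟩
    · simp [tgt, Spack]
    · rcases hor with h | h
      · rw [← h, show par k (tgt k (Sum.inr (Sum.inr i))) = Sum.inr (i, 4) from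
          par_step k i (by decide)]
        simp [Spack]
      · obtain ⟨j', rfl, hj⟩ := par_eq_inr k (h : par k w = Sum.inr (i, 3))
        have h3 : ((3 : Fin 5)).val = 3 := rfl
        have : j' = 2 := Fin.ext (by omega)
        subst this
        simp [Spack]

lemma disj_pack : ∀ i j : I k, i ≠ j → Disjoint (Spack k i) (Spack k j) := by
  rintro (b | i | i) (b' | i' | i') hne <;>
    rw [Finset.disjoint_left] <;>
    intro a ha hb
  · cases b <;> cases b' <;>
      first
      | exact absurd rfl hne
      | (simp only [Spack, Finset.mem_insert, Finset.mem_singleton] at ha hb;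
         rcases ha with rfl | rfl <;> rcases hb with hb | hb <;>
           exact absurd (Sum.inl.inj hb).symm (by decide))
  · cases b <;>
      simp only [Spack, Finset.mem_insert, Finset.mem_singleton] at ha hb <;>
      rcases ha with rfl | rfl <;> simp_all
  · cases b <;>
      simp only [Spack, Finset.mem_insert, Finset.mem_singleton] at ha hb <;>
      rcases ha with rfl | rfl <;> simp_all
  · cases b' <;>
      simp only [Spack, Finset.mem_insert, Finset.mem_singleton] at ha hb <;>
      rcases hb with rfl | rfl <;> simp_all
  · have hii : i ≠ i' := fun h => hne (by rw [h])
    simp only [Spack, Finset.mem_insert, Finset.mem_singleton] at ha hb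
    rcases ha with rfl | rfl <;> rcases hb with hb | hb <;>
      simp only [Sum.inr.injEq, Prod.mk.injEq] at hb <;> exact hii hb.1
  · simp only [Spack, Finset.mem_insert, Finset.mem_singleton] at ha hb
    rcases ha with rfl | rfl <;> rcases hb with hb | hb | hb <;>
      simp only [Sum.inr.injEq, Prod.mk.injEq] at hb <;>
      exact absurd hb.2 (by decide)
  · cases b' <;>
      simp only [Spack, Finset.mem_insert, Finset.mem_singleton] at ha hb <;>
      rcases hb with rfl | rfl <;> simp_all
  · simp only [Spack, Finset.mem_insert, Finset.mem_singleton] at ha hb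
    rcases ha with rfl | rfl | rfl <;> rcases hb with hb | hb <;>
      simp only [Sum.inr.injEq, Prod.mk.injEq] at hb <;>
      exact absurd hb.2 (by decide)
  · have hii : i ≠ i' := fun h => hne (by rw [h])
    simp only [Spack, Finset.mem_insert, Finset.mem_singleton] at ha hb
    rcases ha with rfl | rfl | rfl <;> rcases hb with hb | hb | hb <;>
      simp only [Sum.inr.injEq, Prod.mk.injEq] at hb <;> exact hii hb.1

lemma domNum : dominationNumber (G k) = 2 * k + 2 := by
  refine dominationNumber_eq (F k (Sum.inl (false, fun _ => 0)))
    (F_dominating k _) (F_card k _) ?_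
  intro D hD
  have := card_le_of_packing (tgt k) (Spack k) (hS_pack k) (disj_pack k) hD
  simp only [Fintype.card_sum, Fintype.card_bool, Fintype.card_fin] at this
  omega

lemma count : 2 * 5 ^ k + 3 ^ k ≤ numMinDomSets (G k) := by
  have := le_numMinDomSets (G := G k) (F k) (F_dominating k)
    (fun x => by rw [F_card k x, domNum k]) (F_injective k)
  simp only [Fintype.card_sum, Fintype.card_prod, Fintype.card_bool, Fintype.card_fun,
    Fintype.card_fin] at this
  omega

lemma isTree : (G k).IsTree :=
  parentGraph_isTree (par k) (ht k) (Sum.inl 0) (hr k) (hht k)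

end EvenT


/-- For every positive integer `γ` there is a finite tree with domination number `γ`
having more than `(2/5) · √5 ^ γ` minimum dominating sets. -/
theorem exists_tree_many_minDomSets (γ : ℕ) (hγ : 0 < γ) :
    ∃ (V : Type) (_ : Fintype V) (G : SimpleGraph V),
      G.IsTree ∧ dominationNumber G = γ ∧
      (2 / 5 : ℝ) * Real.sqrt 5 ^ γ < (numMinDomSets G : ℝ) := by
  rcases Nat.even_or_odd γ with he | ho
  · -- even case: γ = 2k + 2
    obtain ⟨m, hm⟩ := he
    have hm1 : 1 ≤ m := by omega
    obtain ⟨k, hk⟩ : ∃ k, γ = 2 * k + 2 := ⟨m - 1, by omega⟩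
    refine ⟨EvenT.V k, inferInstance, EvenT.G k, EvenT.isTree k,
      by rw [EvenT.domNum k, hk], ?_⟩
    have hcount : ((2 * 5 ^ k + 3 ^ k : ℕ) : ℝ) ≤ (numMinDomSets (EvenT.G k) : ℝ) := by
      exact_mod_cast EvenT.count k
    have hsq : Real.sqrt 5 ^ γ = 5 ^ (k + 1) := by
      rw [hk, show 2 * k + 2 = 2 * (k + 1) by ring, pow_mul, Real.sq_sqrt]
      norm_num
    rw [hsq]
    have heq : (2 / 5 : ℝ) * 5 ^ (k + 1) = 2 * 5 ^ k := by
      rw [pow_succ]; ring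
    rw [heq]
    have h3 : (0 : ℝ) < 3 ^ k := by positivity
    have hpc : ((2 * 5 ^ k + 3 ^ k : ℕ) : ℝ) = 2 * 5 ^ k + 3 ^ k := by push_cast; ring
    rw [hpc] at hcount
    linarith
  · -- odd case: γ = 2k + 1
    obtain ⟨k, hk⟩ := ho
    refine ⟨OddT.V k, inferInstance, OddT.G k, OddT.isTree k,
      by rw [OddT.domNum k, hk], ?_⟩
    have hcount : ((5 ^ k : ℕ) : ℝ) ≤ (numMinDomSets (OddT.G k) : ℝ) := by
      exact_mod_cast OddT.count k
    have hpc : ((5 ^ k : ℕ) : ℝ) = 5 ^ k := by push_cast; ring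
    rw [hpc] at hcount
    have hsq : Real.sqrt 5 ^ γ = 5 ^ k * Real.sqrt 5 := by
      rw [hk, pow_succ, pow_mul, Real.sq_sqrt] <;> norm_num
    rw [hsq]
    have hs : Real.sqrt 5 < 5 / 2 := by
      have h1 : (5 : ℝ) < (5 / 2) ^ 2 := by norm_num
      have h2 : (0 : ℝ) < 5 / 2 := by norm_num
      nlinarith [Real.sq_sqrt (show (0:ℝ) ≤ 5 by norm_num),
        Real.sqrt_nonneg (5 : ℝ)]
    have hpow : (0 : ℝ) < 5 ^ k := by positivity
    have : (2 / 5 : ℝ) * (5 ^ k * Real.sqrt 5) < (2 / 5 : ℝ) * (5 ^ k * (5 / 2)) := by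
      have := mul_lt_mul_of_pos_left hs hpow
      nlinarith
    calc (2 / 5 : ℝ) * (5 ^ k * Real.sqrt 5)
        < (2 / 5 : ℝ) * (5 ^ k * (5 / 2)) := this
      _ = 5 ^ k := by ring
      _ ≤ (numMinDomSets (OddT.G k) : ℝ) := hcount
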